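/- In the DodgsonSum election Ĉ,V̂ built from odd-voter Dodgson triples (C_j,c,V_j), the common candidate c is preferred to every separator candidate in S by Σ_j ||V_j|| of the 2Σ_j||V_j|| - 1 voters (a strict majority), and for each i, c is preferred to every candidate of C_i \ {c} by exactly half of the voters that do not simulate V_i. -/

import Mathlib

/-- A voter's preference order is a list of candidates in *increasing* order of
preference (the head is the least preferred, the last element the most preferred).
`prefers v x y` means voter `v` strictly prefers `x` to `y`. -/
def prefers {α : Type*} [DecidableEq α] (v : List α) (x y : α) : Prop :=
  v.idxOf y < v.idxOf x

/-- The number of voters in the profile `V` preferring `x` to `y`. -/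
def numPrefer {α : Type*} [DecidableEq α] (V : List (List α)) (x y : α) : ℕ :=
  (V.filter (fun v => decide (v.idxOf y < v.idxOf x))).length

/-- `c` is a Condorcet winner: strictly more than half of the voters prefer `c`
to each other candidate. -/
def CondorcetWinner {α : Type*} [DecidableEq α] (C : Finset α) (V : List (List α))
    (c : α) : Prop :=
  c ∈ C ∧ ∀ d ∈ C, d ≠ c → V.length < 2 * numPrefer V c d

/-- One switch in a single preference order: exchange two adjacent candidates. -/
def SwitchVoter {α : Type*} (v w : List α) : Prop :=
  ∃ (l r : List α) (x y : α), v = l ++ x :: y :: r ∧ w = l ++ y :: x :: r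

/-- One switch in a profile: exchange two adjacent candidates in one voter's order. -/
def SwitchProfile {α : Type*} (V W : List (List α)) : Prop :=
  ∃ (P Q : List (List α)) (v w : List α),
    V = P ++ v :: Q ∧ W = P ++ w :: Q ∧ SwitchVoter v w

/-- `Reach R k a b`: `b` is reachable from `a` in exactly `k` `R`-steps. -/
def Reach {β : Type*} (R : β → β → Prop) : ℕ → β → β → Prop
  | 0, a, b => a = b
  | k + 1, a, b => ∃ m, R a m ∧ Reach R k m b

/-- The Dodgson score of candidate `c`: the minimum number of switches needed to
make `c` a Condorcet winner. -/
noncomputable def DodgsonScore {α : Type*} [DecidableEq α] (C : Finset α)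
    (V : List (List α)) (c : α) : ℕ :=
  sInf {k | ∃ W, Reach SwitchProfile k V W ∧ CondorcetWinner C W c}

/-- `v` is a valid preference order on the candidate set `C`. -/
def IsVoter {α : Type*} [DecidableEq α] (C : Finset α) (v : List α) : Prop :=
  v.Nodup ∧ ∀ x, x ∈ v ↔ x ∈ C

section DodgsonSum

variable {α : Type*} [DecidableEq α] {k : ℕ}

/-- Validity of the data for the `DodgsonSum` construction: `k` Dodgson triples
`(Cs j, c, Vs j)` sharing only the common candidate `c`, each with an odd number
of voters (valid linear orders), together with a list `sL` of separator
candidates of cardinality `∑ j, ||Cs j|| · ||Vs j||`, disjoint from all the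
`Cs j`. -/
def DSumOK (Cs : Fin k → Finset α) (Vs : Fin k → List (List α)) (c : α)
    (sL : List α) : Prop :=
  (∀ j, c ∈ Cs j) ∧
  (∀ j j', j ≠ j' → Cs j ∩ Cs j' = {c}) ∧
  (∀ j, Odd (Vs j).length) ∧
  (∀ j, ∀ v ∈ Vs j, IsVoter (Cs j) v) ∧
  sL.Nodup ∧
  sL.length = ∑ j, (Cs j).card * (Vs j).length ∧
  (∀ z ∈ sL, ∀ j, z ∉ Cs j)

/-- The merged candidate set `Ĉ = S ∪ ⋃ j, Cs j`. -/
def DSumCands (Cs : Fin k → Finset α) (sL : List α) : Finset α :=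
  sL.toFinset ∪ Finset.univ.biUnion Cs

/-- A voter simulating the voter `v` of `Vs i`: the `S`-block lowest, then the
blocks `Cs j \ {c}` for `j ≠ i` (in arbitrary order), then the original order
`v` on top (lists are in increasing preference). -/
def IsSimVoter (Cs : Fin k → Finset α) (c : α) (sL : List α) (i : Fin k)
    (v u : List α) : Prop :=
  ∃ B : List α, B.Nodup ∧
    (∀ z, z ∈ B ↔ ∃ j, j ≠ i ∧ z ∈ Cs j ∧ z ≠ c) ∧
    u = sL ++ B ++ v

/-- A normalizing voter determined by the set `I` of indices whose blocks are
placed above the `S`-block: the blocks `Cs j \ {c}` for `j ∉ I` lowest, then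
`c`, then the `S`-block, then the blocks `Cs j \ {c}` for `j ∈ I` on top. -/
def IsNormVoter (Cs : Fin k → Finset α) (c : α) (sL : List α)
    (I : Finset (Fin k)) (u : List α) : Prop :=
  ∃ B₁ B₂ : List α, B₁.Nodup ∧ B₂.Nodup ∧
    (∀ z, z ∈ B₁ ↔ ∃ j, j ∉ I ∧ z ∈ Cs j ∧ z ≠ c) ∧
    (∀ z, z ∈ B₂ ↔ ∃ j, j ∈ I ∧ z ∈ Cs j ∧ z ≠ c) ∧
    u = B₁ ++ c :: (sL ++ B₂)

/-- The `DodgsonSum` election: for each `i` the voters of `Vs i` are replaced by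
simulating voters `sims i`, and `(∑ j, ||Vs j||) - 1` normalizing voters
(each given by its index set paired with its order) are appended; for each `i`,
exactly `⌊||Vs i|| / 2⌋` normalizing voters place the block `Cs i` below `c`. -/
def IsDSumElection (Cs : Fin k → Finset α) (Vs : Fin k → List (List α))
    (c : α) (sL : List α) (sims : Fin k → List (List α))
    (normPairs : List (Finset (Fin k) × List α))
    (Vhat : List (List α)) : Prop :=
  (∀ i, List.Forall₂ (IsSimVoter Cs c sL i) (Vs i) (sims i)) ∧
  (∀ p ∈ normPairs, IsNormVoter Cs c sL p.1 p.2) ∧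
  normPairs.length = (∑ j, (Vs j).length) - 1 ∧
  (∀ i, (normPairs.filter (fun p => decide (i ∉ p.1))).length =
    (Vs i).length / 2) ∧
  Vhat = (List.ofFn sims).flatten ++ normPairs.map Prod.snd

end DodgsonSum


section Helpers

variable {α : Type*} [DecidableEq α]

theorem numPrefer_append' (V W : List (List α)) (x y : α) :
    numPrefer (V ++ W) x y = numPrefer V x y + numPrefer W x y := by
  simp [numPrefer, List.filter_append]

theorem numPrefer_eq_length' {V : List (List α)} {x y : α}
    (h : ∀ v ∈ V, v.idxOf y < v.idxOf x) : numPrefer V x y = V.length := by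
  unfold numPrefer
  rw [List.filter_eq_self.mpr fun v hv => decide_eq_true (h v hv)]

theorem numPrefer_eq_zero' {V : List (List α)} {x y : α}
    (h : ∀ v ∈ V, ¬ v.idxOf y < v.idxOf x) : numPrefer V x y = 0 := by
  unfold numPrefer
  rw [List.filter_eq_nil_iff.mpr (fun v hv => by simpa using h v hv)]
  rfl

theorem indexOf_lt_of_mem_left' {P v : List α} {e c : α} (he : e ∈ P) (hc : c ∉ P) :
    (P ++ v).idxOf e < (P ++ v).idxOf c := by
  rw [List.idxOf_append_of_mem he, List.idxOf_append_of_notMem hc]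
  exact lt_of_lt_of_le (List.idxOf_lt_length_iff.2 he) (Nat.le_add_right _ _)

theorem not_indexOf_lt' {P r : List α} {x c : α} (hc : c ∉ P) (hx : x ∉ P) (hxc : x ≠ c) :
    ¬ (P ++ c :: r).idxOf x < (P ++ c :: r).idxOf c := by
  rw [List.idxOf_append_of_notMem hc, List.idxOf_append_of_notMem hx,
    List.idxOf_cons_self, List.idxOf_cons_ne _ (Ne.symm hxc)]
  omega

theorem forall₂_mem_right' {β γ : Type*} {R : β → γ → Prop} {l₁ : List β} {l₂ : List γ}
    (h : List.Forall₂ R l₁ l₂) : ∀ b ∈ l₂, ∃ a ∈ l₁, R a b := by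
  induction h with
  | nil => simp
  | cons h _ ih =>
    intro b hb
    rcases List.mem_cons.1 hb with rfl | hb
    · exact ⟨_, List.mem_cons_self, h⟩
    · obtain ⟨a, ha, hr⟩ := ih b hb
      exact ⟨a, List.mem_cons_of_mem _ ha, hr⟩

end Helpers

/-- In the `DodgsonSum` election, `c` is preferred to every
separator candidate by `∑ j, ||Vs j||` of the `2 ∑ j, ||Vs j|| - 1` voters
(a strict majority), and for each `i`, `c` is preferred to every candidate of
`Cs i \ {c}` by exactly half of the voters that do not simulate `Vs i`. -/
theorem dodgsonSum_counts {α : Type*} [DecidableEq α] {k : ℕ}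
    (Cs : Fin k → Finset α) (Vs : Fin k → List (List α)) (c : α) (sL : List α)
    (sims : Fin k → List (List α)) (normPairs : List (Finset (Fin k) × List α))
    (Vhat : List (List α))
    (hok : DSumOK Cs Vs c sL)
    (hel : IsDSumElection Cs Vs c sL sims normPairs Vhat) :
    (∀ z ∈ sL, numPrefer Vhat c z = ∑ j, (Vs j).length ∧
      Vhat.length < 2 * numPrefer Vhat c z) ∧
    (∀ i : Fin k, ∀ e ∈ Cs i, e ≠ c →
      2 * numPrefer
          ((List.ofFn (fun j => if j = i then ([] : List (List α)) else sims j)).flatten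
            ++ normPairs.map Prod.snd) c e =
        ((List.ofFn (fun j => if j = i then ([] : List (List α)) else sims j)).flatten
            ++ normPairs.map Prod.snd).length) := by
  obtain ⟨hcC, hinter, hodd, hvoters, hnodup, hlen, hsep⟩ := hok
  obtain ⟨hsim, hnorm, hnplen, hnfilter, hVhat⟩ := hel
  have hsimlen : ∀ j, (sims j).length = (Vs j).length := fun j => ((hsim j).length_eq).symm
  constructor
  · intro z hz
    -- positivity and a witness index
    have h0 : 0 < sL.length := List.length_pos_iff.2 (List.ne_nil_of_mem hz)
    rw [hlen] at h0
    have hsumne : ∑ j, (Vs j).length ≠ 0 := by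
      intro h
      have hall : ∀ j : Fin k, (Vs j).length = 0 :=
        fun j => (Finset.sum_eq_zero_iff.mp h) j (Finset.mem_univ j)
      have : ∑ j, (Cs j).card * (Vs j).length = 0 :=
        Finset.sum_eq_zero (fun j _ => by rw [hall j, mul_zero])
      omega
    obtain ⟨j₀, -, hj₀⟩ := Finset.exists_ne_zero_of_sum_ne_zero hsumne
    have hc_sL : c ∉ sL := fun h => hsep c h j₀ (hcC j₀)
    have hzc : z ≠ c := fun h => hsep z hz j₀ (h ▸ hcC j₀)
    have hsimall : ∀ u ∈ (List.ofFn sims).flatten, u.idxOf z < u.idxOf c := by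
      intro u hu
      rw [List.mem_flatten] at hu
      obtain ⟨l, hl, hul⟩ := hu
      rw [List.mem_ofFn] at hl
      obtain ⟨i, rfl⟩ := hl
      obtain ⟨v, hv, B, hBnd, hBmem, hueq⟩ := forall₂_mem_right' (hsim i) u hul
      rw [hueq, List.append_assoc]
      exact indexOf_lt_of_mem_left' hz hc_sL
    have hnormall : ∀ u ∈ normPairs.map Prod.snd, ¬ u.idxOf z < u.idxOf c := by
      intro u hu
      rw [List.mem_map] at hu
      obtain ⟨p, hp, rfl⟩ := hu
      obtain ⟨B₁, B₂, -, -, hB₁, -, hueq⟩ := hnorm p hp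
      rw [hueq]
      have hcB₁ : c ∉ B₁ := fun h => by
        obtain ⟨j, -, -, h'⟩ := (hB₁ c).1 h; exact h' rfl
      have hzB₁ : z ∉ B₁ := fun h => by
        obtain ⟨j, -, hj, -⟩ := (hB₁ z).1 h; exact hsep z hz j hj
      exact not_indexOf_lt' hcB₁ hzB₁ hzc
    have hflatlen : (List.ofFn sims).flatten.length = ∑ j, (Vs j).length := by
      rw [List.length_flatten, List.map_ofFn, List.sum_ofFn]
      exact Finset.sum_congr rfl fun j _ => hsimlen j
    have hnp : numPrefer Vhat c z = ∑ j, (Vs j).length := by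
      rw [hVhat, numPrefer_append', numPrefer_eq_length' hsimall,
        numPrefer_eq_zero' hnormall, hflatlen, add_zero]
    refine ⟨hnp, ?_⟩
    rw [hnp]
    have hVhatlen : Vhat.length = ∑ j, (Vs j).length + ((∑ j, (Vs j).length) - 1) := by
      rw [hVhat, List.length_append, List.length_map, hnplen, hflatlen]
    omega
  · intro i e heCs hec
    have he_sL : e ∉ sL := fun h => hsep e h i heCs
    have hc_sL : c ∉ sL := fun h => hsep c h i (hcC i)
    have heonly : ∀ j, e ∈ Cs j → j = i := by
      intro j hj
      by_contra hne
      have h1 : e ∈ Cs j ∩ Cs i := Finset.mem_inter.2 ⟨hj, heCs⟩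
      rw [hinter j i hne] at h1
      exact hec (Finset.mem_singleton.1 h1)
    have hsimall : ∀ u ∈ (List.ofFn
        (fun j => if j = i then ([] : List (List α)) else sims j)).flatten,
        u.idxOf e < u.idxOf c := by
      intro u hu
      rw [List.mem_flatten] at hu
      obtain ⟨l, hl, hul⟩ := hu
      rw [List.mem_ofFn] at hl
      obtain ⟨j, rfl⟩ := hl
      by_cases hji : j = i
      · simp [hji] at hul
      · simp only [if_neg hji] at hul
        obtain ⟨v, hv, B, hBnd, hBmem, hueq⟩ := forall₂_mem_right' (hsim j) u hul
        rw [hueq]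
        have heB : e ∈ B := (hBmem e).2 ⟨i, Ne.symm hji, heCs, hec⟩
        have hcB : c ∉ B := fun h => by
          obtain ⟨_, -, -, h'⟩ := (hBmem c).1 h; exact h' rfl
        have heP : e ∈ sL ++ B := List.mem_append_right _ heB
        have hcP : c ∉ sL ++ B := by
          rw [List.mem_append]; rintro (h | h); exacts [hc_sL h, hcB h]
        exact indexOf_lt_of_mem_left' heP hcP
    have hnormcnt : numPrefer (normPairs.map Prod.snd) c e
        = (normPairs.filter (fun p => decide (i ∉ p.1))).length := by
      unfold numPrefer
      rw [List.filter_map, List.length_map]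
      refine congrArg List.length (List.filter_congr ?_)
      intro p hp
      obtain ⟨B₁, B₂, -, -, hB₁, hB₂, hueq⟩ := hnorm p hp
      have hcB₁ : c ∉ B₁ := fun h => by
        obtain ⟨j, -, -, h'⟩ := (hB₁ c).1 h; exact h' rfl
      simp only [Function.comp_apply, decide_eq_decide]
      rw [hueq]
      constructor
      · intro hlt
        intro hiI
        have heB₁ : e ∉ B₁ := fun h => by
          obtain ⟨j, hjI, hj, -⟩ := (hB₁ e).1 h
          exact hjI (heonly j hj ▸ hiI)
        exact not_indexOf_lt' hcB₁ heB₁ hec hlt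
      · intro hiI
        have heB₁ : e ∈ B₁ := (hB₁ e).2 ⟨i, hiI, heCs, hec⟩
        exact indexOf_lt_of_mem_left' heB₁ hcB₁
    have hflatlen2 : (List.ofFn
        (fun j => if j = i then ([] : List (List α)) else sims j)).flatten.length
        = ∑ j, if j = i then 0 else (Vs j).length := by
      rw [List.length_flatten, List.map_ofFn, List.sum_ofFn]
      refine Finset.sum_congr rfl fun j _ => ?_
      by_cases hj : j = i <;> simp [hj, hsimlen]
    have hsplit : ∑ j, (Vs j).length
        = (Vs i).length + ∑ j, (if j = i then 0 else (Vs j).length) := by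
      have hpt : ∀ j : Fin k, (Vs j).length
          = (if j = i then (Vs i).length else 0) + (if j = i then 0 else (Vs j).length) := by
        intro j; by_cases hj : j = i <;> simp [hj]
      rw [Finset.sum_congr rfl fun j _ => hpt j, Finset.sum_add_distrib,
        Finset.sum_ite_eq' Finset.univ i (fun _ => (Vs i).length)]
      simp
    obtain ⟨m, hm⟩ := hodd i
    rw [numPrefer_append', numPrefer_eq_length' hsimall, hnormcnt, hnfilter i,
      List.length_append, List.length_map, hnplen, hflatlen2]
    omega
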